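/- Let 0 < β < 1, T > 0, and let f : (−∞, T] → ℝ be continuous, constant on (−∞, 0] (i.e., f(t) = f(0) for all t ≤ 0), and such that f is differentiable on (0, T] with f′ ∈ L¹(0, T) ∩ C((0, T]). Then for every t ∈ (0, T], the limit lim_{ε → 0⁺} ∫_ε^∞ (f(t) − f(t − s)) · s · ρ_∞(s) ds exists and equals the Caputo fractional derivative (1/Γ(1 − β)) ∫₀^t f′(s) (t − s)^{−β} ds, where ρ_∞(s) = (β / Γ(1 − β)) s^{−β−2}. -/

import Mathlib

open MeasureTheory Set Filter Topology


lemma ftc_aux (T : ℝ) (f f' : ℝ → ℝ) (hfc : ContinuousOn f (Set.Iic T))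
    (hf' : ∀ s ∈ Set.Ioc (0 : ℝ) T, HasDerivWithinAt f (f' s) (Set.Ioc 0 T) s)
    (hint : IntegrableOn f' (Set.Ioo 0 T) volume)
    {t : ℝ} (ht : t ∈ Set.Ioc (0:ℝ) T) {a : ℝ} (ha : a ∈ Set.Icc 0 t) :
    ∫ u in Set.Ioc a t, f' u = f t - f a := by
  rcases eq_or_lt_of_le ha.2 with rfl | hat
  · simp
  have hii : IntervalIntegrable f' volume a t := by
    rw [intervalIntegrable_iff_integrableOn_Ioc_of_le ha.2]
    rw [integrableOn_Ioc_iff_integrableOn_Ioo]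
    exact hint.mono_set (Set.Ioo_subset_Ioo (by linarith [ha.1]) ht.2)
  have := intervalIntegral.integral_eq_sub_of_hasDerivAt_of_le ha.2
    (hfc.mono (fun x hx => le_trans hx.2 ht.2))
    (fun x hx => (hf' x ⟨lt_of_le_of_lt ha.1 hx.1, le_trans hx.2.le ht.2⟩).hasDerivAt
      (Ioc_mem_nhds (lt_of_le_of_lt ha.1 hx.1) (lt_of_lt_of_le hx.2 ht.2))) hii
  rw [← this, intervalIntegral.integral_of_le ha.2]

lemma tail_aux {β : ℝ} (hβ0 : 0 < β) {a : ℝ} (ha : 0 < a) :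
    ∫ s in Set.Ioi a, β * s ^ (-β - 1) = a ^ (-β) := by
  rw [integral_const_mul, integral_Ioi_rpow_of_lt (by linarith) ha]
  have : -β - 1 + 1 = -β := by ring
  rw [this]
  field_simp


lemma dom_aux {β T : ℝ} (hβ : β ∈ Set.Ioo (0:ℝ) 1) (f' : ℝ → ℝ)
    (hint : IntegrableOn f' (Set.Ioo 0 T) volume)
    (hf'c : ContinuousOn f' (Set.Ioc 0 T))
    {t : ℝ} (ht : t ∈ Set.Ioc (0:ℝ) T) :
    IntegrableOn (fun u => |f' u| * (t - u) ^ (-β)) (Set.Ioc 0 t) := by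
  obtain ⟨ht0, htT⟩ := ht
  have h2 : (0:ℝ) < t/2 := by linarith
  have hunion : Set.Ioc (0:ℝ) t = Set.Ioc 0 (t/2) ∪ Set.Ioc (t/2) t := by
    rw [Set.Ioc_union_Ioc_eq_Ioc (by linarith) (by linarith)]
  rw [hunion]
  apply MeasureTheory.IntegrableOn.union
  · -- on (0, t/2] : bound by |f'| * (t/2)^(-β)
    have hmeas : AEStronglyMeasurable (fun u => |f' u| * (t - u) ^ (-β))
        (volume.restrict (Set.Ioc 0 (t/2))) := by
      apply ContinuousOn.aestronglyMeasurable _ measurableSet_Ioc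
      apply ContinuousOn.mul
      · exact ((hf'c.mono (Set.Ioc_subset_Ioc le_rfl (by linarith))).abs)
      · apply ContinuousOn.rpow_const (by fun_prop)
        intro x hx
        left
        have : x ≤ t/2 := hx.2
        intro h; nlinarith [sub_eq_zero.mp h]
    have hi : IntegrableOn (fun u => |f' u| * (t/2) ^ (-β)) (Set.Ioc 0 (t/2)) := by
      apply Integrable.mul_const
      have : IntegrableOn f' (Set.Ioc 0 (t/2)) := by
        rw [integrableOn_Ioc_iff_integrableOn_Ioo]
        exact hint.mono_set (Set.Ioo_subset_Ioo le_rfl (by linarith))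
      exact this.abs
    apply hi.mono' hmeas
    filter_upwards [ae_restrict_mem measurableSet_Ioc] with u hu
    have h1 : (0:ℝ) < t - u := by linarith [hu.2]
    rw [Real.norm_eq_abs, abs_mul, abs_abs, abs_of_nonneg (Real.rpow_nonneg h1.le _)]
    apply mul_le_mul_of_nonneg_left _ (abs_nonneg _)
    exact Real.rpow_le_rpow_of_nonpos h2 (by linarith [hu.2]) (by linarith [hβ.1])
  · -- on (t/2, t] : f' bounded, (t-u)^(-β) integrable
    rw [integrableOn_Ioc_iff_integrableOn_Ioo]
    obtain ⟨M, hM⟩ := (isCompact_Icc (a := t/2) (b := t)).exists_bound_of_continuousOn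
      (hf'c.mono (fun x hx => ⟨lt_of_lt_of_le h2 hx.1, le_trans hx.2 htT⟩))
    have hrint : IntegrableOn (fun u => (t - u) ^ (-β)) (Set.Ioo (t/2) t) := by
      have h1 : IntervalIntegrable (fun x : ℝ => x ^ (-β)) volume (t/2) 0 :=
        intervalIntegral.intervalIntegrable_rpow' (by linarith [hβ.2])
      have h2 := h1.comp_sub_left t
      rw [intervalIntegrable_iff_integrableOn_Ioo_of_le (by linarith)] at h2
      have he : t - t/2 = t/2 := by ring
      rw [he] at h2
      simpa using h2
    have hmeas : AEStronglyMeasurable (fun u => |f' u| * (t - u) ^ (-β))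
        (volume.restrict (Set.Ioo (t/2) t)) := by
      apply ContinuousOn.aestronglyMeasurable _ measurableSet_Ioo
      apply ContinuousOn.mul
      · exact ((hf'c.mono (fun x hx => ⟨lt_trans h2 hx.1, le_trans hx.2.le htT⟩)).abs)
      · apply ContinuousOn.rpow_const (by fun_prop)
        intro x hx
        left
        intro h; nlinarith [sub_eq_zero.mp h, hx.2]
    apply Integrable.mono' (g := fun u => |M| * (t - u) ^ (-β)) (hrint.const_mul _) hmeas
    filter_upwards [ae_restrict_mem measurableSet_Ioo] with u hu
    have h1 : (0:ℝ) < t - u := by linarith [hu.2]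
    rw [Real.norm_eq_abs, abs_mul, abs_abs, abs_of_nonneg (Real.rpow_nonneg h1.le _)]
    apply mul_le_mul_of_nonneg_right _ (Real.rpow_nonneg h1.le _)
    exact le_trans (hM u ⟨hu.1.le, hu.2.le⟩) (le_abs_self M)

lemma swap_aux {β T : ℝ} (hβ : β ∈ Set.Ioo (0:ℝ) 1)
    (f f' : ℝ → ℝ) (hfc : ContinuousOn f (Set.Iic T))
    (hconst : ∀ t ≤ (0 : ℝ), f t = f 0)
    (hf' : ∀ s ∈ Set.Ioc (0 : ℝ) T, HasDerivWithinAt f (f' s) (Set.Ioc 0 T) s)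
    (hint : IntegrableOn f' (Set.Ioo 0 T) volume)
    (hf'c : ContinuousOn f' (Set.Ioc 0 T))
    {t : ℝ} (ht : t ∈ Set.Ioc (0:ℝ) T) {ε : ℝ} (hε : 0 < ε) :
    ∫ s in Set.Ioi ε, (f t - f (t - s)) * (β * s ^ (-β - 1))
      = ∫ u in Set.Ioc 0 t, f' u * (max ε (t - u)) ^ (-β) := by
  obtain ⟨ht0, htT⟩ := ht
  set A : Set (ℝ × ℝ) := {p | t - p.1 ≤ p.2} with hA_def
  set g : ℝ × ℝ → ℝ := fun p => f' p.2 * (β * p.1 ^ (-β - 1)) with hg_def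
  have hA : MeasurableSet A :=
    (isClosed_le (by fun_prop) (by fun_prop)).measurableSet
  set μ := volume.restrict (Set.Ioi ε) with hμ
  set ν := volume.restrict (Set.Ioc 0 t) with hν
  have hf'm : AEStronglyMeasurable f' ν :=
    (hf'c.mono (Set.Ioc_subset_Ioc le_rfl htT)).aestronglyMeasurable measurableSet_Ioc
  have hker : AEStronglyMeasurable (fun s : ℝ => β * s ^ (-β - 1)) μ := by
    apply ContinuousOn.aestronglyMeasurable _ measurableSet_Ioi
    apply continuousOn_const.mul
    apply ContinuousOn.rpow_const (by fun_prop)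
    intro x hx
    exact Or.inl (ne_of_gt (lt_trans hε hx))
  have hgm : AEStronglyMeasurable g (μ.prod ν) := (hf'm.comp_snd).mul hker.comp_fst
  have hf'i : IntegrableOn f' (Set.Ioc 0 t) := by
    rw [integrableOn_Ioc_iff_integrableOn_Ioo]
    exact hint.mono_set (Set.Ioo_subset_Ioo le_rfl htT)
  have hbint : Integrable (fun p : ℝ × ℝ => |β * p.1 ^ (-β - 1)| * |f' p.2|) (μ.prod ν) :=
    Integrable.mul_prod
      ((integrableOn_Ioi_rpow_of_lt (show -β - 1 < -1 by linarith [hβ.1]) hε).const_mul β).abs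
      hf'i.abs
  have hGi : Integrable (A.indicator g) (μ.prod ν) := by
    apply hbint.mono' (hgm.indicator hA)
    filter_upwards with p
    calc ‖A.indicator g p‖ ≤ ‖g p‖ := norm_indicator_le_norm_self g p
      _ = |β * p.1 ^ (-β - 1)| * |f' p.2| := by
          rw [hg_def]; simp [Real.norm_eq_abs, abs_mul]; ring
  -- swap
  have hswap : (∫ s, ∫ u, A.indicator g (s, u) ∂ν ∂μ)
      = ∫ u, ∫ s, A.indicator g (s, u) ∂μ ∂ν :=
    MeasureTheory.integral_integral_swap hGi
  -- left inner integrals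
  have hL : ∀ s ∈ Set.Ioi ε, (∫ u, A.indicator g (s, u) ∂ν)
      = (f t - f (t - s)) * (β * s ^ (-β - 1)) := by
    intro s hs
    have hs0 : (0:ℝ) < s := lt_trans hε hs
    have h1 : (fun u => A.indicator g (s, u))
        = (Set.Ici (t - s)).indicator (fun u => f' u * (β * s ^ (-β - 1))) := by
      funext u
      simp only [Set.indicator_apply, hA_def, hg_def, Set.mem_Ici, Set.mem_setOf_eq]
    rw [h1, hν, setIntegral_indicator measurableSet_Ici]
    rcases le_or_gt (t - s) 0 with hts | hts
    · have h2 : Set.Ioc 0 t ∩ Set.Ici (t - s) = Set.Ioc 0 t :=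
        Set.inter_eq_left.mpr (fun u hu => le_trans hts hu.1.le)
      rw [h2, integral_mul_const, ftc_aux T f f' hfc hf' hint ⟨ht0, htT⟩ ⟨le_rfl, ht0.le⟩,
        hconst (t - s) hts]
    · have h2 : Set.Ioc 0 t ∩ Set.Ici (t - s) = Set.Icc (t - s) t := by
        ext u
        simp only [Set.mem_inter_iff, Set.mem_Ioc, Set.mem_Ici, Set.mem_Icc]
        constructor
        · rintro ⟨⟨_, h2⟩, h3⟩; exact ⟨h3, h2⟩
        · rintro ⟨h2, h3⟩; exact ⟨⟨by linarith, h3⟩, h2⟩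
      rw [h2, integral_Icc_eq_integral_Ioc, integral_mul_const,
        ftc_aux T f f' hfc hf' hint ⟨ht0, htT⟩ ⟨hts.le, by linarith⟩]
  -- right inner integrals
  have hR : ∀ u ∈ Set.Ioc 0 t, (∫ s, A.indicator g (s, u) ∂μ)
      = f' u * (max ε (t - u)) ^ (-β) := by
    intro u hu
    have h1 : (fun s => A.indicator g (s, u))
        = (Set.Ici (t - u)).indicator (fun s => f' u * (β * s ^ (-β - 1))) := by
      funext s
      simp only [Set.indicator_apply, hA_def, hg_def, Set.mem_Ici, Set.mem_setOf_eq]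
      have hiff : t - s ≤ u ↔ t - u ≤ s := ⟨fun hc => by linarith, fun hc => by linarith⟩
      by_cases h : t - u ≤ s
      · rw [if_pos (hiff.mpr h), if_pos h]
      · rw [if_neg (fun hc => h (hiff.mp hc)), if_neg h]
    rw [h1, hμ, setIntegral_indicator measurableSet_Ici]
    rcases le_or_gt (t - u) ε with htu | htu
    · have h2 : Set.Ioi ε ∩ Set.Ici (t - u) = Set.Ioi ε :=
        Set.inter_eq_left.mpr (fun s hs => le_trans htu (le_of_lt hs))
      rw [h2, max_eq_left htu, integral_const_mul, tail_aux hβ.1 hε]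
    · have h2 : Set.Ioi ε ∩ Set.Ici (t - u) = Set.Ici (t - u) :=
        Set.inter_eq_right.mpr (fun s hs => lt_of_lt_of_le htu hs)
      rw [h2, max_eq_right htu.le, integral_Ici_eq_integral_Ioi, integral_const_mul,
        tail_aux hβ.1 (lt_trans hε htu)]
  calc ∫ s in Set.Ioi ε, (f t - f (t - s)) * (β * s ^ (-β - 1))
      = ∫ s, ∫ u, A.indicator g (s, u) ∂ν ∂μ := by
        rw [hμ]
        apply setIntegral_congr_fun measurableSet_Ioi
        intro s hs
        exact (hL s hs).symm
    _ = ∫ u, ∫ s, A.indicator g (s, u) ∂μ ∂ν := hswap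
    _ = ∫ u in Set.Ioc 0 t, f' u * (max ε (t - u)) ^ (-β) := by
        rw [hν]
        apply setIntegral_congr_fun measurableSet_Ioc
        intro u hu
        exact hR u hu

/-- The infinite-horizon nonlocal gradient with kernel
`ρ_∞(s) = (β/Γ(1-β)) s^{-β-2}` recovers the Caputo fractional derivative:
for `f` continuous on `(-∞,T]`, constant on `(-∞,0]` and differentiable on
`(0,T]` with `f' ∈ L¹(0,T) ∩ C((0,T])`, and every `t ∈ (0,T]`,
`lim_{ε→0⁺} ∫_ε^∞ (f(t)-f(t-s)) s ρ_∞(s) ds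
  = (1/Γ(1-β)) ∫₀^t f'(s) (t-s)^{-β} ds`. -/
theorem stmt5 (β T : ℝ) (hβ : β ∈ Set.Ioo (0 : ℝ) 1) (hT : 0 < T)
    (f f' : ℝ → ℝ) (hfc : ContinuousOn f (Set.Iic T))
    (hconst : ∀ t ≤ (0 : ℝ), f t = f 0)
    (hf' : ∀ s ∈ Set.Ioc (0 : ℝ) T, HasDerivWithinAt f (f' s) (Set.Ioc 0 T) s)
    (hint : IntegrableOn f' (Set.Ioo 0 T) volume)
    (hf'c : ContinuousOn f' (Set.Ioc 0 T)) :
    ∀ t ∈ Set.Ioc (0 : ℝ) T,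
      Tendsto
        (fun e : ℝ => ∫ s in Set.Ioi e,
          (f t - f (t - s)) * s * ((β / Real.Gamma (1 - β)) * s ^ (-β - 2)))
        (nhdsWithin 0 (Set.Ioi 0))
        (nhds ((1 / Real.Gamma (1 - β)) *
          ∫ s in (0 : ℝ)..t, f' s * (t - s) ^ (-β))) := by
  intro t ht
  have hβ0 := hβ.1
  have hβ1 := hβ.2
  have hΓ : 0 < Real.Gamma (1 - β) := Real.Gamma_pos_of_pos (by linarith)
  set Γ := Real.Gamma (1 - β) with hΓ_def
  set ν := volume.restrict (Set.Ioc 0 t) with hν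
  have hdom := dom_aux hβ f' hint hf'c ht
  have hf'm : AEStronglyMeasurable f' ν :=
    (hf'c.mono (Set.Ioc_subset_Ioc le_rfl ht.2)).aestronglyMeasurable measurableSet_Ioc
  have hae : ∀ᵐ u ∂ν, u ∈ Set.Ioc 0 t ∧ u < t := by
    have h1 := ae_restrict_mem (μ := volume) (s := Set.Ioc 0 t) measurableSet_Ioc
    have h2 : ∀ᵐ u ∂ν, u ≠ t := by
      refine ae_iff.mpr ?_
      have he : {u : ℝ | ¬ u ≠ t} = {t} := by ext u; simp
      rw [he, hν, Measure.restrict_apply (measurableSet_singleton t)]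
      exact measure_mono_null Set.inter_subset_left Real.volume_singleton
    filter_upwards [h1, h2] with u hu hne
    exact ⟨hu, lt_of_le_of_ne hu.2 hne⟩
  -- Dominated convergence for the inner integral
  have hlim : Tendsto (fun ε => ∫ u in Set.Ioc 0 t, f' u * (max ε (t - u)) ^ (-β))
      (nhdsWithin 0 (Set.Ioi 0))
      (𝓝 (∫ u in Set.Ioc 0 t, f' u * (t - u) ^ (-β))) := by
    apply tendsto_integral_filter_of_dominated_convergence
      (fun u => |f' u| * (t - u) ^ (-β)) ?_ ?_ hdom ?_
    · filter_upwards [self_mem_nhdsWithin] with ε hε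
      apply hf'm.mul
      apply Continuous.aestronglyMeasurable
      apply Continuous.rpow_const (by fun_prop)
      intro x
      exact Or.inl (ne_of_gt (lt_of_lt_of_le hε (le_max_left _ _)))
    · filter_upwards [self_mem_nhdsWithin] with ε (hε : (0:ℝ) < ε)
      filter_upwards [hae] with u ⟨hu, hut⟩
      have h1 : (0:ℝ) < t - u := by linarith [hut]
      have h2 : (0:ℝ) < max ε (t - u) := lt_of_lt_of_le hε (le_max_left _ _)
      rw [Real.norm_eq_abs, abs_mul, abs_of_nonneg (Real.rpow_nonneg h2.le _)]
      apply mul_le_mul_of_nonneg_left _ (abs_nonneg _)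
      exact Real.rpow_le_rpow_of_nonpos h1 (le_max_right _ _) (by linarith)
    · filter_upwards [hae] with u ⟨hu, hut⟩
      have h1 : (0:ℝ) < t - u := by linarith [hut]
      apply Tendsto.congr' _ tendsto_const_nhds
      filter_upwards [Ioo_mem_nhdsGT_of_mem ⟨le_refl (0:ℝ), h1⟩] with ε hε
      rw [max_eq_right hε.2.le]
  -- Rewrite the target integral
  have htarget : ∫ s in (0:ℝ)..t, f' s * (t - s) ^ (-β)
      = ∫ u in Set.Ioc 0 t, f' u * (t - u) ^ (-β) :=
    intervalIntegral.integral_of_le ht.1.le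
  -- Eventual equality of the two families
  have heq : (fun e : ℝ => ∫ s in Set.Ioi e,
      (f t - f (t - s)) * s * ((β / Γ) * s ^ (-β - 2)))
      =ᶠ[nhdsWithin 0 (Set.Ioi 0)]
      (fun ε => (1 / Γ) * ∫ u in Set.Ioc 0 t, f' u * (max ε (t - u)) ^ (-β)) := by
    filter_upwards [self_mem_nhdsWithin] with ε (hε : (0:ℝ) < ε)
    have h1 : ∀ s ∈ Set.Ioi ε, (f t - f (t - s)) * s * ((β / Γ) * s ^ (-β - 2))
        = (1 / Γ) * ((f t - f (t - s)) * (β * s ^ (-β - 1))) := by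
      intro s hs
      have hs0 : (0:ℝ) < s := lt_trans hε hs
      have h2 : s ^ (-β - 1) = s * s ^ (-β - 2) := by
        rw [show (-β - 1) = 1 + (-β - 2) by ring, Real.rpow_add hs0, Real.rpow_one]
      rw [h2]; ring
    rw [setIntegral_congr_fun measurableSet_Ioi h1, integral_const_mul,
      swap_aux hβ f f' hfc hconst hf' hint hf'c ht hε]
  rw [htarget]
  exact Tendsto.congr' heq.symm (hlim.const_mul (1 / Γ))
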